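/- Let d ≥ 1, let l : ℝᵈ → ℝ be differentiable with ‖∇l(x)‖₂ ≤ C_l for all x (C_l > 0), let g : ℝ → ℝ be continuously differentiable and strictly increasing with g(0) = 0, let λ > 0, let 𝒞 > 0 satisfy g(𝒞) = 1/λ, let C_g > 0 satisfy g′(u) ≤ C_g for all u ∈ [0, 𝒞], and let p : ℝ → ℝ be continuous with 0 ≤ p(t) ≤ L for all t, where L > 0. Define c(x) = ∫_{l(x)}^{l(x)+𝒞} g(t − l(x)) p(t) dt. Then c is differentiable, ∇c(x) = ∇l(x) · [ (1/λ) p(l(x) + 𝒞) − ∫_{l(x)}^{l(x)+𝒞} g′(t − l(x)) p(t) dt ], and ‖∇c(x)‖₂ ≤ C_l · max{L/λ, C_g 𝒞 L} for all x ∈ ℝᵈ. -/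

import Mathlib

/-- Gradient formula and gradient-norm bound for the expected best-response
cost `c x = ∫_{l x}^{l x + 𝒞} g (t - l x) p t dt` of a randomized threshold
classifier with density `p` bounded by `L`. -/
theorem expected_BRC_gradient
    (d : ℕ) (hd : 1 ≤ d)
    (l : EuclideanSpace ℝ (Fin d) → ℝ) (hl_diff : Differentiable ℝ l)
    (C_l : ℝ) (hCl : 0 < C_l) (hl_grad : ∀ x, ‖gradient l x‖ ≤ C_l)
    (g : ℝ → ℝ) (hg : ContDiff ℝ 1 g) (hg_mono : StrictMono g) (hg0 : g 0 = 0)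
    (lam : ℝ) (hlam : 0 < lam)
    (𝒞 : ℝ) (h𝒞 : 0 < 𝒞) (hg𝒞 : g 𝒞 = 1 / lam)
    (C_g : ℝ) (hCg : 0 < C_g) (hg' : ∀ u ∈ Set.Icc (0 : ℝ) 𝒞, deriv g u ≤ C_g)
    (L : ℝ) (hL : 0 < L)
    (p : ℝ → ℝ) (hp_cont : Continuous p) (hp : ∀ t, 0 ≤ p t ∧ p t ≤ L)
    (c : EuclideanSpace ℝ (Fin d) → ℝ)
    (hc : ∀ x, c x = ∫ t in (l x)..(l x + 𝒞), g (t - l x) * p t) :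
    Differentiable ℝ c ∧
      (∀ x, gradient c x =
        ((1 / lam) * p (l x + 𝒞) - ∫ t in (l x)..(l x + 𝒞), deriv g (t - l x) * p t)
          • gradient l x) ∧
      (∀ x, ‖gradient c x‖ ≤ C_l * max (L / lam) (C_g * 𝒞 * L)) := by
  -- basic facts about g
  have hgd : Differentiable ℝ g := hg.differentiable one_ne_zero
  have hg'c : Continuous (deriv g) := hg.continuous_deriv le_rfl
  have hg'nonneg : ∀ u, 0 ≤ deriv g u := by
    intro u
    have h := (hgd u).hasDerivAt
    rw [hasDerivAt_iff_tendsto_slope] at h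
    refine ge_of_tendsto h ?_
    filter_upwards [self_mem_nhdsWithin] with t ht
    rw [slope_def_field, div_eq_inv_mul]
    rcases lt_or_gt_of_ne (ht : t ≠ u) with h1 | h1
    · exact mul_nonneg_of_nonpos_of_nonpos (inv_nonpos.2 (sub_nonpos.2 h1.le))
        (sub_nonpos.2 (hg_mono.monotone h1.le))
    · exact mul_nonneg (inv_nonneg.2 (sub_nonneg.2 h1.le))
        (sub_nonneg.2 (hg_mono.monotone h1.le))
  -- antiderivative of p
  set P : ℝ → ℝ := fun t => ∫ u in (0:ℝ)..t, p u with hPdef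
  have hP : ∀ b : ℝ, HasDerivAt P (p b) b := fun b =>
    intervalIntegral.integral_hasDerivAt_right (hp_cont.intervalIntegrable _ _)
      (hp_cont.stronglyMeasurable.stronglyMeasurableAtFilter) hp_cont.continuousAt
  have hPcont : Continuous P := by
    have : Differentiable ℝ P := fun b => (hP b).differentiableAt
    exact this.continuous
  -- the one-dimensional function
  set F : ℝ → ℝ := fun s => ∫ t in s..(s + 𝒞), g (t - s) * p t with hFdef
  -- substitution identity for any continuous integrand
  have hsub : ∀ (q : ℝ → ℝ) (s : ℝ),
      (∫ u in (0:ℝ)..𝒞, deriv g u * q (u + s)) =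
        ∫ t in s..(s + 𝒞), deriv g (t - s) * q t := by
    intro q s
    have := intervalIntegral.integral_comp_add_right
      (f := fun t => deriv g (t - s) * q t) (a := (0:ℝ)) (b := 𝒞) s
    simpa [add_sub_cancel_right, zero_add, add_comm] using this
  -- integration by parts
  have hIBP : ∀ s : ℝ, F s = g 𝒞 * P (s + 𝒞) - ∫ u in (0:ℝ)..𝒞, deriv g u * P (u + s) := by
    intro s
    have hu : ∀ t ∈ Set.uIcc s (s + 𝒞), HasDerivAt (fun t => g (t - s)) (deriv g (t - s)) t := by
      intro t _
      simpa [Function.comp_def] using (hgd (t - s)).hasDerivAt.comp t ((hasDerivAt_id t).sub_const s)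
    have hv : ∀ t ∈ Set.uIcc s (s + 𝒞), HasDerivAt P (p t) t := fun t _ => hP t
    have hu' : IntervalIntegrable (fun t => deriv g (t - s)) MeasureTheory.volume s (s + 𝒞) :=
      (hg'c.comp (continuous_id.sub continuous_const)).intervalIntegrable _ _
    have hv' : IntervalIntegrable p MeasureTheory.volume s (s + 𝒞) :=
      hp_cont.intervalIntegrable _ _
    have h := intervalIntegral.integral_mul_deriv_eq_deriv_mul hu hv hu' hv'
    have hPs0 : P s = P s := rfl
    rw [hFdef]
    simp only
    rw [h, hsub P s]
    simp [hg0]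
  -- derivative of the parametric integral
  have hG : ∀ s : ℝ, HasDerivAt (fun s => ∫ u in (0:ℝ)..𝒞, deriv g u * P (u + s))
      (∫ u in (0:ℝ)..𝒞, deriv g u * p (u + s)) s := by
    intro s
    have key := intervalIntegral.hasDerivAt_integral_of_dominated_loc_of_deriv_le
      (F := fun x u => deriv g u * P (u + x)) (F' := fun x u => deriv g u * p (u + x))
      (x₀ := s) (bound := fun u => |deriv g u| * L) (a := (0:ℝ)) (b := 𝒞)
      (μ := MeasureTheory.volume) (s := Metric.ball s 1) (Metric.ball_mem_nhds s one_pos)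
      (Filter.Eventually.of_forall fun x =>
        ((hg'c.mul (hPcont.comp (continuous_id.add continuous_const))).aestronglyMeasurable))
      ((hg'c.mul (hPcont.comp (continuous_id.add continuous_const))).intervalIntegrable _ _)
      ((hg'c.mul (hp_cont.comp (continuous_id.add continuous_const))).aestronglyMeasurable)
      (Filter.Eventually.of_forall fun u _ x _ => by
        have := (hp (u + x)).1
        have := (hp (u + x)).2
        rw [Real.norm_eq_abs, abs_mul]
        exact mul_le_mul_of_nonneg_left
          (by rw [abs_of_nonneg (hp (u + x)).1]; exact (hp (u + x)).2) (abs_nonneg _))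
      ((hg'c.abs.mul continuous_const).intervalIntegrable _ _)
      (Filter.Eventually.of_forall fun u _ x _ => by
        have h1 : HasDerivAt (fun x => P (u + x)) (p (u + x)) x := by
          simpa [Function.comp_def] using (hP (u + x)).comp x ((hasDerivAt_id x).const_add u)
        exact h1.const_mul (deriv g u))
    exact key.2
  -- derivative of F
  set a : ℝ → ℝ := fun s =>
    (1 / lam) * p (s + 𝒞) - ∫ t in s..(s + 𝒞), deriv g (t - s) * p t with hadef
  have hF : ∀ s : ℝ, HasDerivAt F (a s) s := by
    intro s
    have hFeq : F = fun s => g 𝒞 * P (s + 𝒞) - ∫ u in (0:ℝ)..𝒞, deriv g u * P (u + s) :=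
      funext hIBP
    rw [hFeq]
    have h1 : HasDerivAt (fun s => g 𝒞 * P (s + 𝒞)) (g 𝒞 * p (s + 𝒞)) s := by
      have : HasDerivAt (fun s : ℝ => P (s + 𝒞)) (p (s + 𝒞)) s := by
        simpa [Function.comp_def] using (hP (s + 𝒞)).comp s ((hasDerivAt_id s).add_const 𝒞)
      exact this.const_mul (g 𝒞)
    have h2 := (h1.sub (hG s))
    have : a s = g 𝒞 * p (s + 𝒞) - ∫ u in (0:ℝ)..𝒞, deriv g u * p (u + s) := by
      rw [hadef]; simp only; rw [hg𝒞, hsub p s]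
    rwa [this]
  -- the integral bounds
  have hIbound : ∀ s : ℝ, 0 ≤ (∫ t in s..(s + 𝒞), deriv g (t - s) * p t) ∧
      (∫ t in s..(s + 𝒞), deriv g (t - s) * p t) ≤ C_g * 𝒞 * L := by
    intro s
    rw [← hsub p s]
    constructor
    · apply intervalIntegral.integral_nonneg (by linarith)
      intro u _
      exact mul_nonneg (hg'nonneg u) (hp (u + s)).1
    · have hint : IntervalIntegrable (fun u => deriv g u * p (u + s))
          MeasureTheory.volume 0 𝒞 :=
        (hg'c.mul (hp_cont.comp (continuous_id.add continuous_const))).intervalIntegrable _ _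
      have hconst : IntervalIntegrable (fun _ : ℝ => C_g * L) MeasureTheory.volume 0 𝒞 :=
        intervalIntegrable_const
      have hmono := intervalIntegral.integral_mono_on (by linarith : (0:ℝ) ≤ 𝒞) hint hconst
        (fun u hu => by
          have h1 : deriv g u ≤ C_g := hg' u hu
          have h2 : p (u + s) ≤ L := (hp (u + s)).2
          have h3 : 0 ≤ p (u + s) := (hp (u + s)).1
          calc deriv g u * p (u + s) ≤ C_g * p (u + s) :=
                mul_le_mul_of_nonneg_right h1 h3
            _ ≤ C_g * L := mul_le_mul_of_nonneg_left h2 hCg.le)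
      calc (∫ u in (0:ℝ)..𝒞, deriv g u * p (u + s)) ≤ ∫ _ in (0:ℝ)..𝒞, C_g * L := hmono
        _ = C_g * 𝒞 * L := by
            rw [intervalIntegral.integral_const]; simp; ring
  -- the scalar bound
  have habound : ∀ s : ℝ, |a s| ≤ max (L / lam) (C_g * 𝒞 * L) := by
    intro s
    have h1 : 0 ≤ (1 / lam) * p (s + 𝒞) :=
      mul_nonneg (by positivity) (hp (s + 𝒞)).1
    have h2 : (1 / lam) * p (s + 𝒞) ≤ L / lam := by
      rw [div_eq_mul_one_div L lam, mul_comm L (1 / lam)]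
      exact mul_le_mul_of_nonneg_left (hp (s + 𝒞)).2 (by positivity)
    obtain ⟨h3, h4⟩ := hIbound s
    rw [hadef]
    simp only
    rw [abs_sub_le_iff]
    constructor
    · have := le_max_left (L / lam) (C_g * 𝒞 * L); linarith
    · have := le_max_right (L / lam) (C_g * 𝒞 * L); linarith
  -- gradient of c
  have hgrad : ∀ x, HasGradientAt c (a (l x) • gradient l x) x := by
    intro x
    have hceq : c = F ∘ l := funext fun x => hc x
    have hl : HasGradientAt l (gradient l x) x := (hl_diff x).hasGradientAt
    rw [hasGradientAt_iff_hasFDerivAt] at hl ⊢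
    rw [hceq]
    have := (hF (l x)).comp_hasFDerivAt x hl
    rwa [map_smul] at *
  refine ⟨fun x => ((hgrad x).differentiableAt), fun x => (hgrad x).gradient, fun x => ?_⟩
  rw [(hgrad x).gradient, norm_smul, Real.norm_eq_abs]
  have hMnonneg : (0:ℝ) ≤ max (L / lam) (C_g * 𝒞 * L) :=
    le_trans (by positivity) (le_max_left _ _)
  calc |a (l x)| * ‖gradient l x‖ ≤ max (L / lam) (C_g * 𝒞 * L) * C_l :=
        mul_le_mul (habound (l x)) (hl_grad x) (norm_nonneg _) hMnonneg
    _ = C_l * max (L / lam) (C_g * 𝒞 * L) := mul_comm _ _
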